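/- Consider the triangle GKM graph Γ: the complete graph K₃ with vertices p, q, r, axial function into ℤ² with basis a, b given by α(pq) = a, α(qr) = −a+b, α(rp) = −b (and negatives on reversed edges), and the unique connection. Then its group of axial functions 𝒜(Γ, α, ∇) is isomorphic to ℤ², and in particular this GKM graph admits no extension to a (2,ℓ)-type GKM graph with ℓ > 2. -/

import Mathlib

/-- The combinatorial core of an `m`-valent graph: oriented edges with reversal,
orderings of the `m` outgoing edges at each vertex, and a connection. -/
structure GKMCore (V E : Type*) (m : ℕ) where
  src : E → V
  tgt : E → V
  rev : E → E
  rev_rev : ∀ e, rev (rev e) = e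
  src_rev : ∀ e, src (rev e) = tgt e
  no_loops : ∀ e, src e ≠ tgt e
  /-- the `j`-th outgoing edge at vertex `p` -/
  ord : V → Fin m → E
  ord_src : ∀ p j, src (ord p j) = p
  /-- the index of an edge among the outgoing edges at its source -/
  eidx : E → Fin m
  ord_eidx : ∀ e, ord (src e) (eidx e) = e
  eidx_ord : ∀ p j, eidx (ord p j) = j
  /-- the connection: `conn e` maps outgoing edges at `src e` to outgoing edges at `tgt e` -/
  conn : E → E → E
  conn_src : ∀ e e', src e' = src e → src (conn e e') = tgt e
  conn_self : ∀ e, conn e e = rev e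
  conn_conn : ∀ e e', src e' = src e → conn (rev e) (conn e e') = e'

namespace GKMCore

variable {V E : Type*} {m : ℕ}

/-- The permutation of `Fin m` induced by the connection along `e`:
`σ_e` is characterized by `∇_e (e_{σ(j), src e}) = e_{j, tgt e}`. -/
def sigma (C : GKMCore V E m) (e : E) (j : Fin m) : Fin m :=
  C.eidx (C.conn (C.rev e) (C.ord (C.tgt e) j))

/-- Adjacency of vertices through an oriented edge. -/
def Adj (C : GKMCore V E m) (p q : V) : Prop := ∃ e, C.src e = p ∧ C.tgt e = q

/-- Connectedness of the graph. -/
def Connected (C : GKMCore V E m) : Prop := ∀ p q, Relation.ReflTransGen C.Adj p q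

end GKMCore

/-- An axial function with values in `ℤⁿ ≅ H²(BTⁿ)` on the core `C`, compatible
with the connection `C.conn` via (given) congruence coefficients: this is the
data of a GKM graph of type `(m, n)` (effectiveness stated separately). -/
structure AxialOn {V E : Type*} {m : ℕ} (C : GKMCore V E m) (n : ℕ) where
  α : E → Fin n → ℤ
  α_rev : ∀ e, α (C.rev e) = - α e
  α_ne : ∀ e, α e ≠ 0
  pairwise_indep : ∀ e e', C.src e = C.src e' → e ≠ e' → LinearIndependent ℤ ![α e, α e']
  /-- the congruence coefficients `c_e(e')` -/
  coeff : E → E → ℤ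
  congruence : ∀ e e', C.src e' = C.src e → α (C.conn e e') = α e' + coeff e e' • α e

namespace AxialOn

variable {V E : Type*} {m n : ℕ} {C : GKMCore V E m}

/-- Effectiveness: at every vertex the values of the axial function span `ℤⁿ`. -/
def Effective (A : AxialOn C n) : Prop :=
  ∀ p, Submodule.span ℤ (Set.range fun j => A.α (C.ord p j)) = ⊤

/-- The invariant function `c : E(Γ) → ℤ^m`, the vector of congruence
coefficients of `e` on the (ordered) outgoing edges at `src e`. -/
def cvec (A : AxialOn C n) (e : E) : Fin m → ℤ := fun j => A.coeff e (C.ord (C.src e) j)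

/-- `A'` is an extension of `A` (same graph, same connection) via a surjective
linear projection `π` with `π ∘ α' = α`. -/
def Extends {l : ℕ} (A' : AxialOn C l) (A : AxialOn C n) : Prop :=
  ∃ π : (Fin l → ℤ) →ₗ[ℤ] (Fin n → ℤ), Function.Surjective π ∧ ∀ e, π (A'.α e) = A.α e

/-- The defining relation of the group of axial functions:
`N_e (f (src e)) - f (tgt e) = f (tgt e)_{ē} • c(ē)` for every edge `e`. -/
def IsAxialClass (A : AxialOn C n) (f : V → Fin m → ℤ) : Prop :=
  ∀ e j, f (C.src e) (C.sigma e j) - f (C.tgt e) j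
      = f (C.tgt e) (C.eidx (C.rev e)) * A.cvec (C.rev e) j

/-- The group of axial functions `𝒜(Γ, α, ∇)` as a `ℤ`-submodule of
`⊕_{p ∈ V(Γ)} ℤ^m`. -/
def axialModule (A : AxialOn C n) : Submodule ℤ (V → Fin m → ℤ) where
  carrier := {f | A.IsAxialClass f}
  zero_mem' := by intro e j; simp [IsAxialClass, cvec]
  add_mem' := by
    intro f g hf hg e j
    have h1 := hf e j
    have h2 := hg e j
    simp only [Pi.add_apply]
    linear_combination h1 + h2
  smul_mem' := by
    intro a f hf e j
    have h1 := hf e j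
    simp only [Pi.smul_apply, smul_eq_mul]
    linear_combination a * h1

end AxialOn

/-! The triangle GKM graph: the complete graph `K₃` with vertices `0, 1, 2`
(`p, q, r`), the GKM graph of `ℂP²` with the standard `T²`-action. -/

/-- Oriented edges of `K₃`: ordered pairs of distinct vertices. -/
def TriE : Type := {x : ZMod 3 × ZMod 3 // x.1 ≠ x.2}

instance : Fintype TriE := by unfold TriE; infer_instance
instance : DecidableEq TriE := by unfold TriE; infer_instance

def triRev (e : TriE) : TriE := ⟨(e.1.2, e.1.1), e.2.symm⟩

def triOrd (p : ZMod 3) (j : Fin 2) : TriE :=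
  ⟨(p, p + ((j : ℕ) : ZMod 3) + 1), by
    have : ∀ (p : ZMod 3) (j : Fin 2), p ≠ p + ((j : ℕ) : ZMod 3) + 1 := by decide
    exact this p j⟩

def triEidx (e : TriE) : Fin 2 := if e.1.2 = e.1.1 + 1 then 0 else 1

def triConn (e e' : TriE) : TriE :=
  if h : e'.1.2 = e.1.2 then triRev e
  else ⟨(e.1.2, e'.1.2), fun hh => h hh.symm⟩

/-- The combinatorial core of the triangle graph `K₃`. -/
def triCore : GKMCore (ZMod 3) TriE 2 where
  src e := e.1.1
  tgt e := e.1.2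
  rev := triRev
  rev_rev := by decide
  src_rev := by decide
  no_loops e := e.2
  ord := triOrd
  ord_src := by decide
  eidx := triEidx
  ord_eidx := by decide
  eidx_ord := by decide
  conn := triConn
  conn_src := by decide
  conn_self := by decide
  conn_conn := by decide

/-- The moment map values: `w 0 = 0`, `w 1 = a = (1,0)`, `w 2 = (0,1)`, so that
`α(pq) = a`, `α(qr) = −a + b`, `α(rp) = −b` where `b = (0,1)`. -/
def triW (p : ZMod 3) : Fin 2 → ℤ := ![![0, 0], ![1, 0], ![0, 1]] ⟨p.val, p.val_lt⟩

section Aux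

variable (A : AxialOn triCore 2)
    (hα : ∀ e : TriE, A.α e = fun t => triW e.1.2 t - triW e.1.1 t)

include hα

lemma tri_coeff (e e' : TriE) (h : e'.1.1 = e.1.1) :
    A.coeff e e' = if e' = e then -2 else -1 := by
  have key : ∀ e e' : TriE, e'.1.1 = e.1.1 →
      (fun t => triW (triConn e e').1.2 t - triW (triConn e e').1.1 t) =
        (fun t => triW e'.1.2 t - triW e'.1.1 t) +
          (if e' = e then (-2 : ℤ) else -1) • fun t => triW e.1.2 t - triW e.1.1 t := by
    decide
  have hc := A.congruence e e' h
  rw [hα, hα, hα] at hc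
  have hc' : (A.coeff e e' - if e' = e then (-2 : ℤ) else -1) •
      (fun t => triW e.1.2 t - triW e.1.1 t) = 0 := by
    rw [sub_smul]
    have hk := key e e' h
    rw [show triCore.conn e e' = triConn e e' from rfl] at hc
    rw [hc] at hk
    rw [sub_eq_zero]
    exact add_left_cancel hk
  have hne := A.α_ne e
  rw [hα] at hne
  obtain ⟨t, ht⟩ := Function.ne_iff.mp hne
  have := congrFun hc' t
  simp only [Pi.smul_apply, smul_eq_mul, Pi.zero_apply] at this
  rcases mul_eq_zero.mp this with h0 | h0
  · linarith [sub_eq_zero.mp h0]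
  · exact absurd h0 ht

lemma tri_cvec (e : TriE) (j : Fin 2) :
    A.cvec e j = if triOrd e.1.1 j = e then -2 else -1 :=
  tri_coeff A hα e (triOrd e.1.1 j) rfl

omit hα

/-- The explicit solution: value at vertex `p` determined by the value `v` at vertex `0`. -/
def triSol (v : Fin 2 → ℤ) (p : ZMod 3) : Fin 2 → ℤ :=
  ![![v 0, v 1], ![v 1 - v 0, -v 0], ![-v 1, v 0 - v 1]] ⟨p.val, p.val_lt⟩

include hα in
lemma tri_cvec' (e : TriE) (j : Fin 2) :
    A.coeff (triCore.rev e) (triCore.ord (triCore.src (triCore.rev e)) j)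
      = if triOrd (triCore.rev e).1.1 j = triCore.rev e then -2 else -1 :=
  tri_coeff A hα (triCore.rev e) (triCore.ord (triCore.src (triCore.rev e)) j) rfl

omit hα

lemma tri_aux (i : Fin 3) (t : Fin 2) (v : Fin 2 → ℤ) :
    ![![v 0, v 1], ![v 1 - v 0, -v 0], ![-v 1, v 0 - v 1]] i t
      = v 0 * ![![1, 0], ![-1, -1], ![0, 1]] i t
        + v 1 * ![![0, 1], ![1, 0], ![-1, -1]] i t := by
  fin_cases i <;> fin_cases t <;> simp <;> ring

lemma triSol_zero (v : Fin 2 → ℤ) : triSol v 0 = ![v 0, v 1] := rfl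
lemma triSol_one (v : Fin 2 → ℤ) : triSol v 1 = ![v 1 - v 0, -v 0] := rfl
lemma triSol_two (v : Fin 2 → ℤ) : triSol v 2 = ![-v 1, v 0 - v 1] := rfl

lemma triSol_eq (v : Fin 2 → ℤ) :
    triSol v = v 0 • triSol ![(1 : ℤ), 0] + v 1 • triSol ![(0 : ℤ), 1] := by
  funext p t
  have := tri_aux ⟨p.val, p.val_lt⟩ t v
  simpa [triSol, Pi.add_apply, Pi.smul_apply] using this

include hα in
lemma triSol_basis0 : A.IsAxialClass (triSol ![(1 : ℤ), 0]) := by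
  have key : ∀ (e : TriE) (j : Fin 2),
      triSol ![(1 : ℤ), 0] (triCore.src e) (triCore.sigma e j)
          - triSol ![(1 : ℤ), 0] (triCore.tgt e) j
        = triSol ![(1 : ℤ), 0] (triCore.tgt e) (triCore.eidx (triCore.rev e)) *
            (if triOrd (triCore.rev e).1.1 j = triCore.rev e then -2 else -1) := by decide
  intro e j
  rw [AxialOn.cvec, tri_cvec' A hα]
  exact key e j

include hα in
lemma triSol_basis1 : A.IsAxialClass (triSol ![(0 : ℤ), 1]) := by
  have key : ∀ (e : TriE) (j : Fin 2),
      triSol ![(0 : ℤ), 1] (triCore.src e) (triCore.sigma e j)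
          - triSol ![(0 : ℤ), 1] (triCore.tgt e) j
        = triSol ![(0 : ℤ), 1] (triCore.tgt e) (triCore.eidx (triCore.rev e)) *
            (if triOrd (triCore.rev e).1.1 j = triCore.rev e then -2 else -1) := by decide
  intro e j
  rw [AxialOn.cvec, tri_cvec' A hα]
  exact key e j

include hα in
lemma triSol_mem (v : Fin 2 → ℤ) : triSol v ∈ A.axialModule := by
  rw [triSol_eq]
  exact Submodule.add_mem _
    (Submodule.smul_mem _ _ (triSol_basis0 A hα))
    (Submodule.smul_mem _ _ (triSol_basis1 A hα))

include hα in
lemma mem_eq_triSol (f : ZMod 3 → Fin 2 → ℤ) (hf : A.IsAxialClass f) :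
    f = triSol (f 0) := by
  have e01 : TriE := ⟨(0, 1), by decide⟩
  have h1 : f 0 1 - f 1 0 = f 1 1 * (-1) := by
    have h := hf ⟨(0, 1), by decide⟩ 0
    exact h.trans (congrArg (fun y => _ * y) (tri_cvec' A hα ⟨(0, 1), by decide⟩ 0))
  have h2 : f 0 0 - f 1 1 = f 1 1 * (-2) := by
    have h := hf ⟨(0, 1), by decide⟩ 1
    exact h.trans (congrArg (fun y => _ * y) (tri_cvec' A hα ⟨(0, 1), by decide⟩ 1))
  have h3 : f 0 1 - f 2 0 = f 2 0 * (-2) := by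
    have h := hf ⟨(0, 2), by decide⟩ 0
    exact h.trans (congrArg (fun y => _ * y) (tri_cvec' A hα ⟨(0, 2), by decide⟩ 0))
  have h4 : f 0 0 - f 2 1 = f 2 0 * (-1) := by
    have h := hf ⟨(0, 2), by decide⟩ 1
    exact h.trans (congrArg (fun y => _ * y) (tri_cvec' A hα ⟨(0, 2), by decide⟩ 1))
  funext p t
  obtain rfl | rfl | rfl : p = 0 ∨ p = 1 ∨ p = 2 := by revert p; decide
  all_goals fin_cases t <;>
    simp [triSol_zero, triSol_one, triSol_two] <;> linarith

end Aux

/-- for the triangle GKM graph (K₃ with `α(pq) = a`,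
`α(qr) = −a+b`, `α(rp) = −b` and the unique connection), the group of axial
functions is isomorphic to `ℤ²`; in particular it admits no extension to a
(2,ℓ)-type GKM graph with `ℓ > 2`. -/
theorem triangle_axialModule_rank_two
    (A : AxialOn triCore 2)
    (hα : ∀ e : TriE, A.α e = fun t => triW e.1.2 t - triW e.1.1 t) :
    Nonempty (A.axialModule ≃ₗ[ℤ] (Fin 2 → ℤ)) ∧
    ∀ l, 2 < l → ¬∃ A' : AxialOn triCore l, A'.Effective ∧ A'.Extends A := by
  constructor
  · exact ⟨{ toFun := fun f => f.1 0
             map_add' := fun f g => rfl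
             map_smul' := fun c f => rfl
             invFun := fun v => ⟨triSol v, triSol_mem A hα v⟩
             left_inv := fun f => Subtype.ext ((mem_eq_triSol A hα f.1 f.2).symm)
             right_inv := fun v => by
               show triSol v 0 = v
               rw [triSol_zero]
               funext t
               fin_cases t <;> rfl }⟩
  · rintro l hl ⟨A', hEff, -⟩
    have h := hEff 0
    have h1 : Module.rank ℤ
        (Submodule.span ℤ (Set.range fun j : Fin 2 => A'.α (triCore.ord 0 j))) ≤ 2 := by
      refine (rank_span_le _).trans (le_trans Cardinal.mk_range_le ?_)
      simp
    rw [h, rank_top, rank_fin_fun] at h1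
    have : l ≤ 2 := by exact_mod_cast h1
    omega
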